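/- Let P be a stratified choice program, let P_i denote the rules of P whose heads are in stratum i, and let P_i* be the union of all P_j for j ≤ i. If M_i is a stable model of P_i*, then every stable model of M_i ∪ P_{i+1} is a stable model of P_{i+1}*. Consequently, the stable models of a stratified choice program can be computed by an iterated choice fixpoint procedure that computes a choice model stratum by stratum. -/

import Mathlib

/-!
# STATEMENT 5

Let `P` be a stratified choice program, let `Pᵢ` denote the rules of `P` whose
heads are in stratum `i`, and let `Pᵢ*` be the union of all `Pⱼ` for `j ≤ i`.
If `Mᵢ` is a stable model of `Pᵢ*`, then every stable model of `Mᵢ ∪ P_{i+1}`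
is a stable model of `P_{i+1}*`.  Consequently, the stable models of a
stratified choice program can be computed by an iterated choice fixpoint
procedure that computes a choice model stratum by stratum.

A choice program with negated goals is *stratified* when the program obtained
by removing its choice goals is stratified with respect to negation.  The
(stable-model) semantics of a choice (sub)program is that of its first-order
equivalent, obtained by the standard `chosen`/`diffChoice` rewriting; the
framework is as in Statement 0.  So that the subprograms `Pᵢ*` of a program
`P` share the same `chosen_r`/`diffChoice_r` vocabulary, the first-order
equivalent is parametrized by the set of rule positions that are kept.
-/

/-- A ground normal logic-program rule over ground atoms `α`. -/
structure GRule (α : Type) where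
  head : α
  pos : Set α
  neg : Set α

/-- A ground normal logic program is a set of ground rules. -/
abbrev GProgram (α : Type) := Set (GRule α)

/-- `M` satisfies a ground rule. -/
def GRule.Sat {α : Type} (r : GRule α) (M : Set α) : Prop :=
  r.pos ⊆ M → (∀ a ∈ r.neg, a ∉ M) → r.head ∈ M

/-- `M` is a model of (i.e. closed under) the program `P`. -/
def IsModel {α : Type} (P : GProgram α) (M : Set α) : Prop := ∀ r ∈ P, r.Sat M

/-- The Gelfond–Lifschitz reduct of `P` with respect to `M`: delete every rule
whose negative body intersects `M`, and delete the negative bodies of the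
remaining rules. -/
def reduct {α : Type} (P : GProgram α) (M : Set α) : GProgram α :=
  {r | ∃ r' ∈ P, (∀ a ∈ r'.neg, a ∉ M) ∧ r = ⟨r'.head, r'.pos, ∅⟩}

/-- The least (Herbrand) model of a program: the intersection of all models. -/
def leastModel {α : Type} (P : GProgram α) : Set α := ⋂₀ {N | IsModel P N}

/-- `M` is a (total, two-valued) stable model of `P` in the sense of
Gelfond–Lifschitz: `M` is the least model of the reduct of `P` by `M`.
Every such model is total: each atom is either true (in `M`) or false. -/
def IsStableModel {α : Type} (P : GProgram α) (M : Set α) : Prop :=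
  M = leastModel (reduct P M)

/-! ## Datalog with choice goals -/

/-- Terms: variables (named by naturals) and constants from `C`. -/
inductive Term (C : Type) where
  | var (v : ℕ)
  | const (c : C)

/-- A relational schema: predicate symbols with arities. -/
structure Schema where
  pred : Type
  ar : pred → ℕ

/-- A (possibly non-ground) atom over schema `S` and constants `C`. -/
structure Atom (S : Schema) (C : Type) where
  p : S.pred
  args : Fin (S.ar p) → Term C

/-- A ground atom. -/
structure GAtom (S : Schema) (C : Type) where
  p : S.pred
  args : Fin (S.ar p) → C

/-- A Datalog rule whose body may additionally contain choice goals
`choice((X),(Y))`, recorded in `cgoals` as pairs `(X, Y)` of disjoint lists of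
variables, with nonempty right side `Y`. -/
structure CRule (S : Schema) (C : Type) where
  head : Atom S C
  pos : List (Atom S C)
  neg : List (Atom S C)
  cgoals : List (List ℕ × List ℕ)
  cgoals_disjoint : ∀ g ∈ cgoals, ∀ v ∈ g.1, v ∉ g.2
  cgoals_right_ne : ∀ g ∈ cgoals, g.2 ≠ []

/-- A choice program: a finite list of rules, possibly with choice goals. -/
abbrev CProgram (S : Schema) (C : Type) := List (CRule S C)

/-- A choice program is *positive* when its non-choice goals contain no
negation. -/
def CProgram.Positive {S : Schema} {C : Type} (P : CProgram S C) : Prop :=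
  ∀ r ∈ P, r.neg = []

def Term.eval {C : Type} (ν : ℕ → C) : Term C → C
  | .var v => ν v
  | .const c => c

def Atom.ground {S : Schema} {C : Type} (a : Atom S C) (ν : ℕ → C) : GAtom S C :=
  ⟨a.p, fun i => (a.args i).eval ν⟩

/-- `W`: the list of all variables occurring in the choice goals of a rule. -/
def CRule.W {S : Schema} {C : Type} (r : CRule S C) : List ℕ :=
  (r.cgoals.flatMap fun g => g.1 ++ g.2).dedup

/-- Atoms of the first-order equivalent `foe(P)`: the original (base) atoms
together with `chosen_r` and `diffChoice_r` atoms for each choice rule `r`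
(rules are referred to by their position in the program). -/
inductive FAtom (S : Schema) (C : Type) where
  | base (a : GAtom S C)
  | chosen (r : ℕ) (w : List C)
  | diff (r : ℕ) (w : List C)

/-- The (ground) positive body of an instantiated rule, as base atoms. -/
def posBody {S : Schema} {C : Type} (r : CRule S C) (ν : ℕ → C) : Set (FAtom S C) :=
  {x | ∃ a ∈ r.pos, x = FAtom.base (a.ground ν)}

/-- The (ground) negative body of an instantiated rule, as base atoms. -/
def negBody {S : Schema} {C : Type} (r : CRule S C) (ν : ℕ → C) : Set (FAtom S C) :=
  {x | ∃ a ∈ r.neg, x = FAtom.base (a.ground ν)}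


/-- The first-order equivalent of the subprogram of `P` consisting of the
rules at the positions in `keep`, together with the database `edb`
(`chosen`/`diffChoice` atoms are indexed by the position of their rule in the
full program `P`, so that all subprograms share one vocabulary). -/
def foeOn {S : Schema} {C : Type} (P : CProgram S C) (keep : Set ℕ)
    (edb : Set (GAtom S C)) : GProgram (FAtom S C) :=
  {r | ∃ a ∈ edb, r = ⟨FAtom.base a, ∅, ∅⟩} ∪
  {r | ∃ i : Fin P.length, (i : ℕ) ∈ keep ∧ ∃ ν : ℕ → C, (P.get i).cgoals = [] ∧
        r = ⟨FAtom.base ((P.get i).head.ground ν), posBody (P.get i) ν,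
             negBody (P.get i) ν⟩} ∪
  {r | ∃ i : Fin P.length, (i : ℕ) ∈ keep ∧ ∃ ν : ℕ → C, (P.get i).cgoals ≠ [] ∧
        r = ⟨FAtom.base ((P.get i).head.ground ν),
             insert (FAtom.chosen i ((P.get i).W.map ν)) (posBody (P.get i) ν),
             negBody (P.get i) ν⟩} ∪
  {r | ∃ i : Fin P.length, (i : ℕ) ∈ keep ∧ ∃ ν : ℕ → C, (P.get i).cgoals ≠ [] ∧
        r = ⟨FAtom.chosen i ((P.get i).W.map ν), posBody (P.get i) ν,
             insert (FAtom.diff i ((P.get i).W.map ν)) (negBody (P.get i) ν)⟩} ∪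
  {r | ∃ i : Fin P.length, (i : ℕ) ∈ keep ∧ ∃ g ∈ (P.get i).cgoals, ∃ ν ν' : ℕ → C,
        (∀ v ∈ g.1, ν v = ν' v) ∧ (∃ v ∈ g.2, ν v ≠ ν' v) ∧
        r = ⟨FAtom.diff i ((P.get i).W.map ν),
             {FAtom.chosen i ((P.get i).W.map ν')}, ∅⟩}

/-- The first-order equivalent `foe(P)` of the whole choice program. -/
def foe {S : Schema} {C : Type} (P : CProgram S C) (edb : Set (GAtom S C)) :
    GProgram (FAtom S C) :=
  foeOn P Set.univ edb

/-- `σ` is a stratification of the choice program `P` (the choice goals being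
ignored): positive goals lie in strata no higher than the head's, negated
goals in strictly lower strata. -/
def StratifiedBy {S : Schema} {C : Type} (P : CProgram S C) (σ : S.pred → ℕ) : Prop :=
  ∀ r ∈ P, (∀ a ∈ r.pos, σ a.p ≤ σ r.head.p) ∧ (∀ a ∈ r.neg, σ a.p < σ r.head.p)

/-- The positions of the rules of `P` whose head predicate is in a stratum
`≤ i` with respect to `σ`. -/
def strataLE {S : Schema} {C : Type} (P : CProgram S C) (σ : S.pred → ℕ) (i : ℕ) :
    Set ℕ :=
  {j | ∃ h : j < P.length, σ ((P.get ⟨j, h⟩).head.p) ≤ i}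

/-- The positions of the rules of `P` whose head predicate is in stratum
exactly `i`. -/
def strataEq {S : Schema} {C : Type} (P : CProgram S C) (σ : S.pred → ℕ) (i : ℕ) :
    Set ℕ :=
  {j | ∃ h : j < P.length, σ ((P.get ⟨j, h⟩).head.p) = i}

/-- `Pᵢ*`: the first-order equivalent of the subprogram of `P` consisting of
the database and the rules of the strata `≤ i`. -/
def Pstar {S : Schema} {C : Type} (P : CProgram S C) (σ : S.pred → ℕ)
    (edb : Set (GAtom S C)) (i : ℕ) : GProgram (FAtom S C) :=
  foeOn P (strataLE P σ i) edb

/-- `P_{i}` (alone): the first-order equivalent of the rules of stratum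
exactly `i`, without the database. -/
def Ponly {S : Schema} {C : Type} (P : CProgram S C) (σ : S.pred → ℕ) (i : ℕ) :
    GProgram (FAtom S C) :=
  foeOn P (strataEq P σ i) ∅

/-- A set `M` of atoms regarded as a program of facts. -/
def ofFacts {α : Type} (M : Set α) : GProgram α := {r | ∃ a ∈ M, r = ⟨a, ∅, ∅⟩}

/-! ## Auxiliary lemmas -/

section Aux

variable {α : Type}

lemma reduct_pos : ∀ r ∈ reduct (P : GProgram α) (M : Set α), r.neg = ∅ := by
  rintro r ⟨r', _, _, rfl⟩; rfl

lemma leastModel_subset {P : GProgram α} {N : Set α} (h : IsModel P N) :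
    leastModel P ⊆ N := Set.sInter_subset_of_mem h

lemma leastModel_mono {P Q : GProgram α} (h : P ⊆ Q) :
    leastModel P ⊆ leastModel Q := by
  apply Set.sInter_subset_sInter
  intro N hN r hr
  exact hN r (h hr)

lemma isModel_leastModel_of_pos {P : GProgram α} (hpos : ∀ r ∈ P, r.neg = ∅) :
    IsModel P (leastModel P) := by
  intro r hr hposS _
  simp only [leastModel, Set.mem_sInter]
  intro N hN
  apply hN r hr (hposS.trans (Set.sInter_subset_of_mem hN))
  intro a ha
  rw [hpos r hr] at ha
  exact ha.elim

lemma isModel_leastModel_reduct (P : GProgram α) (M : Set α) :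
    IsModel (reduct P M) (leastModel (reduct P M)) :=
  isModel_leastModel_of_pos (reduct_pos)

lemma isModel_union {P Q : GProgram α} {M : Set α} :
    IsModel (P ∪ Q) M ↔ IsModel P M ∧ IsModel Q M := by
  constructor
  · exact fun h => ⟨fun r hr => h r (Or.inl hr), fun r hr => h r (Or.inr hr)⟩
  · rintro ⟨h1, h2⟩ r (hr | hr)
    · exact h1 r hr
    · exact h2 r hr

lemma reduct_union (P Q : GProgram α) (M : Set α) :
    reduct (P ∪ Q) M = reduct P M ∪ reduct Q M := by
  ext r
  constructor
  · rintro ⟨r', (h | h), hneg, rfl⟩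
    · exact Or.inl ⟨r', h, hneg, rfl⟩
    · exact Or.inr ⟨r', h, hneg, rfl⟩
  · rintro (⟨r', h, hneg, rfl⟩ | ⟨r', h, hneg, rfl⟩)
    · exact ⟨r', Or.inl h, hneg, rfl⟩
    · exact ⟨r', Or.inr h, hneg, rfl⟩

lemma reduct_ofFacts (N M : Set α) : reduct (ofFacts N) M = ofFacts N := by
  ext r
  constructor
  · rintro ⟨r', ⟨a, ha, rfl⟩, _, rfl⟩
    exact ⟨a, ha, rfl⟩
  · rintro ⟨a, ha, rfl⟩
    exact ⟨⟨a, ∅, ∅⟩, ⟨a, ha, rfl⟩, fun x hx => hx.elim, rfl⟩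

lemma reduct_congr {P : GProgram α} {M M' : Set α}
    (h : ∀ r ∈ P, ∀ a ∈ r.neg, (a ∈ M ↔ a ∈ M')) :
    reduct P M = reduct P M' := by
  ext r
  constructor
  · rintro ⟨r', hr', hneg, rfl⟩
    exact ⟨r', hr', fun a ha hM' => hneg a ha ((h r' hr' a ha).mpr hM'), rfl⟩
  · rintro ⟨r', hr', hneg, rfl⟩
    exact ⟨r', hr', fun a ha hM => hneg a ha ((h r' hr' a ha).mp hM), rfl⟩

end Aux

section FoeAux

variable {S : Schema} {C : Type}

/-- Classification of the heads of rules of `foeOn`. -/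
lemma foeOn_head_classify {P : CProgram S C} {keep : Set ℕ} {edb : Set (GAtom S C)}
    {r : GRule (FAtom S C)} (hr : r ∈ foeOn P keep edb) :
    (∃ a ∈ edb, r.head = FAtom.base a) ∨
    (∃ j : Fin P.length, (j : ℕ) ∈ keep ∧
      ((∃ ν : ℕ → C, r.head = FAtom.base ((P.get j).head.ground ν)) ∨
       (∃ w, r.head = FAtom.chosen j w) ∨ (∃ w, r.head = FAtom.diff j w))) := by
  rcases hr with ((((⟨a, ha, rfl⟩ | ⟨j, hj, ν, _, rfl⟩) | ⟨j, hj, ν, _, rfl⟩) |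
      ⟨j, hj, ν, _, rfl⟩) | ⟨j, hj, g, _, ν, ν', _, _, rfl⟩)
  · exact Or.inl ⟨a, ha, rfl⟩
  · exact Or.inr ⟨j, hj, Or.inl ⟨ν, rfl⟩⟩
  · exact Or.inr ⟨j, hj, Or.inl ⟨ν, rfl⟩⟩
  · exact Or.inr ⟨j, hj, Or.inr (Or.inl ⟨_, rfl⟩)⟩
  · exact Or.inr ⟨j, hj, Or.inr (Or.inr ⟨_, rfl⟩)⟩

/-- Classification of the positive bodies of rules of `foeOn`. -/
lemma foeOn_pos_classify {P : CProgram S C} {keep : Set ℕ} {edb : Set (GAtom S C)}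
    {r : GRule (FAtom S C)} (hr : r ∈ foeOn P keep edb) :
    ∀ x ∈ r.pos,
      (∃ j : Fin P.length, (j : ℕ) ∈ keep ∧
        ((∃ a ∈ (P.get j).pos, ∃ ν : ℕ → C, x = FAtom.base (a.ground ν)) ∨
         (∃ w, x = FAtom.chosen j w))) := by
  rcases hr with ((((⟨a, ha, rfl⟩ | ⟨j, hj, ν, _, rfl⟩) | ⟨j, hj, ν, _, rfl⟩) |
      ⟨j, hj, ν, _, rfl⟩) | ⟨j, hj, g, _, ν, ν', _, _, rfl⟩)
  · rintro x hx; exact hx.elim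
  · rintro x ⟨a, ha, rfl⟩
    exact ⟨j, hj, Or.inl ⟨a, ha, ν, rfl⟩⟩
  · rintro x (rfl | ⟨a, ha, rfl⟩)
    · exact ⟨j, hj, Or.inr ⟨_, rfl⟩⟩
    · exact ⟨j, hj, Or.inl ⟨a, ha, ν, rfl⟩⟩
  · rintro x ⟨a, ha, rfl⟩
    exact ⟨j, hj, Or.inl ⟨a, ha, ν, rfl⟩⟩
  · rintro x rfl
    exact ⟨j, hj, Or.inr ⟨_, rfl⟩⟩

/-- Classification of the negative bodies of rules of `foeOn`. -/
lemma foeOn_neg_classify {P : CProgram S C} {keep : Set ℕ} {edb : Set (GAtom S C)}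
    {r : GRule (FAtom S C)} (hr : r ∈ foeOn P keep edb) :
    ∀ x ∈ r.neg,
      (∃ j : Fin P.length, (j : ℕ) ∈ keep ∧
        ((∃ a ∈ (P.get j).neg, ∃ ν : ℕ → C, x = FAtom.base (a.ground ν)) ∨
         (∃ w, x = FAtom.diff j w))) := by
  rcases hr with ((((⟨a, ha, rfl⟩ | ⟨j, hj, ν, _, rfl⟩) | ⟨j, hj, ν, _, rfl⟩) |
      ⟨j, hj, ν, _, rfl⟩) | ⟨j, hj, g, _, ν, ν', _, _, rfl⟩)
  · rintro x hx; exact hx.elim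
  · rintro x ⟨a, ha, rfl⟩
    exact ⟨j, hj, Or.inl ⟨a, ha, ν, rfl⟩⟩
  · rintro x ⟨a, ha, rfl⟩
    exact ⟨j, hj, Or.inl ⟨a, ha, ν, rfl⟩⟩
  · rintro x (rfl | ⟨a, ha, rfl⟩)
    · exact ⟨j, hj, Or.inr ⟨_, rfl⟩⟩
    · exact ⟨j, hj, Or.inl ⟨a, ha, ν, rfl⟩⟩
  · rintro x hx; exact hx.elim

lemma foeOn_mono_keep {P : CProgram S C} {k1 k2 : Set ℕ} {edb : Set (GAtom S C)}
    (h : k1 ⊆ k2) : foeOn P k1 edb ⊆ foeOn P k2 edb := by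
  rintro r ((((⟨a, ha, rfl⟩ | ⟨j, hj, ν, hc, rfl⟩) | ⟨j, hj, ν, hc, rfl⟩) |
      ⟨j, hj, ν, hc, rfl⟩) | ⟨j, hj, g, hg, ν, ν', h1, h2, rfl⟩)
  · exact Or.inl (Or.inl (Or.inl (Or.inl ⟨a, ha, rfl⟩)))
  · exact Or.inl (Or.inl (Or.inl (Or.inr ⟨j, h hj, ν, hc, rfl⟩)))
  · exact Or.inl (Or.inl (Or.inr ⟨j, h hj, ν, hc, rfl⟩))
  · exact Or.inl (Or.inr ⟨j, h hj, ν, hc, rfl⟩)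
  · exact Or.inr ⟨j, h hj, g, hg, ν, ν', h1, h2, rfl⟩

lemma foeOn_union_keep (P : CProgram S C) (k1 k2 : Set ℕ) (edb : Set (GAtom S C)) :
    foeOn P (k1 ∪ k2) edb = foeOn P k1 edb ∪ foeOn P k2 ∅ := by
  apply Set.Subset.antisymm
  · rintro r ((((⟨a, ha, rfl⟩ | ⟨j, hj, ν, hc, rfl⟩) | ⟨j, hj, ν, hc, rfl⟩) |
        ⟨j, hj, ν, hc, rfl⟩) | ⟨j, hj, g, hg, ν, ν', h1, h2, rfl⟩)
    · exact Or.inl (Or.inl (Or.inl (Or.inl (Or.inl ⟨a, ha, rfl⟩))))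
    · rcases hj with hj | hj
      · exact Or.inl (Or.inl (Or.inl (Or.inl (Or.inr ⟨j, hj, ν, hc, rfl⟩))))
      · exact Or.inr (Or.inl (Or.inl (Or.inl (Or.inr ⟨j, hj, ν, hc, rfl⟩))))
    · rcases hj with hj | hj
      · exact Or.inl (Or.inl (Or.inl (Or.inr ⟨j, hj, ν, hc, rfl⟩)))
      · exact Or.inr (Or.inl (Or.inl (Or.inr ⟨j, hj, ν, hc, rfl⟩)))
    · rcases hj with hj | hj
      · exact Or.inl (Or.inl (Or.inr ⟨j, hj, ν, hc, rfl⟩))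
      · exact Or.inr (Or.inl (Or.inr ⟨j, hj, ν, hc, rfl⟩))
    · rcases hj with hj | hj
      · exact Or.inl (Or.inr ⟨j, hj, g, hg, ν, ν', h1, h2, rfl⟩)
      · exact Or.inr (Or.inr ⟨j, hj, g, hg, ν, ν', h1, h2, rfl⟩)
  · rintro r (hr | hr)
    · exact foeOn_mono_keep Set.subset_union_left hr
    · refine foeOn_mono_keep (Set.subset_union_right (s := k1)) ?_
      rcases hr with ((((⟨a, ha, _⟩ | h) | h) | h) | h)
      · exact ha.elim
      · exact Or.inl (Or.inl (Or.inl (Or.inr h)))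
      · exact Or.inl (Or.inl (Or.inr h))
      · exact Or.inl (Or.inr h)
      · exact Or.inr h

lemma strataLE_succ (P : CProgram S C) (σ : S.pred → ℕ) (i : ℕ) :
    strataLE P σ (i + 1) = strataLE P σ i ∪ strataEq P σ (i + 1) := by
  ext j
  constructor
  · rintro ⟨h, hle⟩
    rcases Nat.lt_or_ge (σ ((P.get ⟨j, h⟩).head.p)) (i + 1) with h' | h'
    · exact Or.inl ⟨h, Nat.lt_succ_iff.mp h'⟩
    · exact Or.inr ⟨h, le_antisymm hle h'⟩
  · rintro (⟨h, hle⟩ | ⟨h, heq⟩)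
    · exact ⟨h, Nat.le_succ_of_le hle⟩
    · exact ⟨h, le_of_eq heq⟩

/-- The "low" atoms: atoms whose truth is determined by the strata `≤ i`. -/
def LoAtom (P : CProgram S C) (σ : S.pred → ℕ) (edb : Set (GAtom S C)) (i : ℕ) :
    Set (FAtom S C) := fun x =>
  match x with
  | .base a => σ a.p ≤ i ∨ a ∈ edb
  | .chosen j _ => j ∈ strataLE P σ i
  | .diff j _ => j ∈ strataLE P σ i

/-- The "high" atoms: atoms that can only be derived by stratum-`i` rules. -/
def HiAtom (P : CProgram S C) (σ : S.pred → ℕ) (i : ℕ) :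
    Set (FAtom S C) := fun x =>
  match x with
  | .base a => σ a.p = i
  | .chosen j _ => j ∈ strataEq P σ i
  | .diff j _ => j ∈ strataEq P σ i

end FoeAux

/-- The splitting step: a stable model of `Mᵢ ∪ P_{i+1}` is a stable model of
`P_{i+1}*` whenever `Mᵢ` is a stable model of `Pᵢ*`. -/
lemma choice_split_step {S : Schema} {C : Type}
    (P : CProgram S C) (σ : S.pred → ℕ) (hstrat : StratifiedBy P σ)
    (edb : Set (GAtom S C)) (i : ℕ) (Mi M : Set (FAtom S C))
    (hMi : IsStableModel (Pstar P σ edb i) Mi)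
    (hM : IsStableModel (ofFacts Mi ∪ Ponly P σ (i + 1)) M) :
    IsStableModel (Pstar P σ edb (i + 1)) M := by
  -- models of the respective reducts
  have hMi' : IsModel (reduct (Pstar P σ edb i) Mi) Mi := by
    have := isModel_leastModel_reduct (Pstar P σ edb i) Mi
    rwa [← hMi] at this
  have hM' : IsModel (reduct (ofFacts Mi ∪ Ponly P σ (i + 1)) M) M := by
    have := isModel_leastModel_reduct (ofFacts Mi ∪ Ponly P σ (i + 1)) M
    rwa [← hM] at this
  have hredM : reduct (ofFacts Mi ∪ Ponly P σ (i + 1)) M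
      = ofFacts Mi ∪ reduct (Ponly P σ (i + 1)) M := by
    rw [reduct_union, reduct_ofFacts]
  -- the database is in `Mi`
  have hedb : ∀ a ∈ edb, FAtom.base a ∈ Mi := by
    intro a ha
    have hrule : (⟨FAtom.base a, ∅, ∅⟩ : GRule (FAtom S C))
        ∈ reduct (Pstar P σ edb i) Mi :=
      ⟨⟨FAtom.base a, ∅, ∅⟩, Or.inl (Or.inl (Or.inl (Or.inl ⟨a, ha, rfl⟩))),
        fun x hx => hx.elim, rfl⟩
    exact hMi' _ hrule (fun x hx => hx.elim) (fun x hx => hx.elim)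
  -- `Mi ⊆ M`
  have hMiM : Mi ⊆ M := by
    intro x hx
    have hrule : (⟨x, ∅, ∅⟩ : GRule (FAtom S C))
        ∈ reduct (ofFacts Mi ∪ Ponly P σ (i + 1)) M := by
      rw [hredM]; exact Or.inl ⟨x, hx, rfl⟩
    exact hM' _ hrule (fun y hy => hy.elim) (fun y hy => hy.elim)
  -- `Mi` consists of low atoms
  have hLo : Mi ⊆ LoAtom P σ edb i := by
    rw [hMi]
    apply leastModel_subset
    rintro r ⟨r', hr', -, rfl⟩ - -
    show r'.head ∈ LoAtom P σ edb i
    rcases foeOn_head_classify hr' with ⟨a, ha, hh⟩ | ⟨j, hj, hc⟩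
    · rw [hh]; exact Or.inr ha
    · rcases hc with ⟨ν, hh⟩ | ⟨w, hh⟩ | ⟨w, hh⟩ <;> rw [hh]
      · obtain ⟨h, hle⟩ := hj
        exact Or.inl hle
      · exact hj
      · exact hj
  -- `M` consists of `Mi` together with high atoms of stratum `i+1`
  have hHi : M ⊆ Mi ∪ HiAtom P σ (i + 1) := by
    rw [hM]
    apply leastModel_subset
    rintro r ⟨r', hr', -, rfl⟩ - -
    show r'.head ∈ Mi ∪ HiAtom P σ (i + 1)
    rcases hr' with ⟨x, hx, rfl⟩ | hr'
    · exact Or.inl hx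
    · rcases foeOn_head_classify hr' with ⟨a, ha, hh⟩ | ⟨j, hj, hc⟩
      · exact ha.elim
      · rcases hc with ⟨ν, hh⟩ | ⟨w, hh⟩ | ⟨w, hh⟩ <;> rw [hh]
        · obtain ⟨h, heq⟩ := hj
          exact Or.inr heq
        · exact Or.inr hj
        · exact Or.inr hj
  -- `M` and `Mi` agree on low atoms
  have hagree : ∀ x ∈ LoAtom P σ edb i, (x ∈ M ↔ x ∈ Mi) := by
    intro x hx
    refine ⟨fun hxM => ?_, fun h => hMiM h⟩
    rcases hHi hxM with h | h
    · exact h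
    · cases x with
      | base a =>
        rcases hx with hle | hedbm
        · exfalso
          have h' : σ a.p = i + 1 := h
          omega
        · exact hedb a hedbm
      | chosen j w =>
        obtain ⟨h1, hle⟩ := hx
        obtain ⟨h2, heq⟩ := h
        have hle' : σ ((P.get ⟨j, h2⟩).head.p) ≤ i := hle
        omega
      | diff j w =>
        obtain ⟨h1, hle⟩ := hx
        obtain ⟨h2, heq⟩ := h
        have hle' : σ ((P.get ⟨j, h2⟩).head.p) ≤ i := hle
        omega
  -- splitting of the program
  have hsplit : Pstar P σ edb (i + 1) = Pstar P σ edb i ∪ Ponly P σ (i + 1) := by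
    unfold Pstar Ponly
    rw [strataLE_succ, foeOn_union_keep]
  -- the reduct of the lower part by `M` equals that by `Mi`
  have hredA : reduct (Pstar P σ edb i) M = reduct (Pstar P σ edb i) Mi := by
    apply reduct_congr
    intro r hr a ha
    apply hagree
    rcases foeOn_neg_classify hr a ha with ⟨j, hj, ⟨b, hb, ν, rfl⟩ | ⟨w, rfl⟩⟩
    · obtain ⟨h, hle⟩ := hj
      have hle' : σ ((P.get j).head.p) ≤ i := hle
      have hlt := (hstrat _ (List.get_mem P j)).2 b hb
      exact Or.inl (show σ b.p ≤ i by omega)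
    · exact hj
  -- the combined reduct program
  set Q : GProgram (FAtom S C) :=
    reduct (Pstar P σ edb i) Mi ∪ reduct (Ponly P σ (i + 1)) M with hQ
  have hQpos : ∀ r ∈ Q, r.neg = ∅ := by
    rintro r (h | h)
    · exact reduct_pos _ h
    · exact reduct_pos _ h
  show M = leastModel (reduct (Pstar P σ edb (i + 1)) M)
  rw [hsplit, reduct_union, hredA, ← hQ]
  apply Set.Subset.antisymm
  · -- `M ⊆ leastModel Q`
    have hmodel : IsModel (ofFacts Mi ∪ reduct (Ponly P σ (i + 1)) M)
        (leastModel Q) := by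
      rw [isModel_union]
      constructor
      · rintro r ⟨a, ha, rfl⟩ - -
        rw [hMi] at ha
        exact leastModel_mono Set.subset_union_left ha
      · intro r hr
        exact (isModel_leastModel_of_pos hQpos) r (Or.inr hr)
    intro x hx
    have hx' : x ∈ leastModel (ofFacts Mi ∪ reduct (Ponly P σ (i + 1)) M) := by
      rw [← hredM, ← hM]; exact hx
    exact leastModel_subset hmodel hx'
  · -- `leastModel Q ⊆ M`
    apply leastModel_subset
    rw [isModel_union]
    constructor
    · rintro r ⟨r', hr', hneg, rfl⟩
      intro hpos _
      have hposMi : r'.pos ⊆ Mi := by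
        intro x hx
        have hxLo : x ∈ LoAtom P σ edb i := by
          rcases foeOn_pos_classify hr' x hx with ⟨j, hj, ⟨b, hb, ν, rfl⟩ | ⟨w, rfl⟩⟩
          · obtain ⟨h, hle⟩ := hj
            have hle' : σ ((P.get j).head.p) ≤ i := hle
            have hb' := (hstrat _ (List.get_mem P j)).1 b hb
            exact Or.inl (le_trans hb' hle')
          · exact hj
        exact (hagree x hxLo).mp (hpos hx)
      have hhead : r'.head ∈ Mi :=
        hMi' (⟨r'.head, r'.pos, ∅⟩ : GRule (FAtom S C)) ⟨r', hr', hneg, rfl⟩ hposMi (fun a ha => ha.elim)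
      exact hMiM hhead
    · intro r hr
      apply hM'
      rw [hredM]
      exact Or.inr hr

/-- Let `P` be a stratified choice program (stratified by
`σ` once its choice goals are removed).  (1) If `Mᵢ` is a stable model of
`Pᵢ*`, then every stable model of `Mᵢ ∪ P_{i+1}` is a stable model of
`P_{i+1}*`.  (2) Consequently the stable models of `P` are computed stratum
by stratum by the iterated (choice) fixpoint procedure: if all strata of `P`
are `≤ k`, `M 0` is a stable model of `P₀*` and each `M (i+1)` is a stable
model of `M i ∪ P_{i+1}`, then `M k` is a stable model of `foe(P)`. -/
theorem stratified_choice_program_iterated_fixpoint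
    {S : Schema} {C : Type} [Finite S.pred] [Finite C]
    (P : CProgram S C) (σ : S.pred → ℕ) (hstrat : StratifiedBy P σ)
    (edb : Set (GAtom S C)) :
    (∀ i : ℕ, ∀ Mi : Set (FAtom S C), IsStableModel (Pstar P σ edb i) Mi →
      ∀ M : Set (FAtom S C),
        IsStableModel (ofFacts Mi ∪ Ponly P σ (i + 1)) M →
        IsStableModel (Pstar P σ edb (i + 1)) M) ∧
    (∀ k : ℕ, (∀ r ∈ P, σ r.head.p ≤ k) →
      ∀ M : ℕ → Set (FAtom S C),
        IsStableModel (Pstar P σ edb 0) (M 0) →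
        (∀ i : ℕ, IsStableModel (ofFacts (M i) ∪ Ponly P σ (i + 1)) (M (i + 1))) →
        IsStableModel (foe P edb) (M k)) := by
  refine ⟨fun i Mi hMi M hM => choice_split_step P σ hstrat edb i Mi M hMi hM, ?_⟩
  intro k hk M h0 hsucc
  have hall : ∀ j, IsStableModel (Pstar P σ edb j) (M j) := by
    intro j
    induction j with
    | zero => exact h0
    | succ j ih =>
        exact choice_split_step P σ hstrat edb j (M j) (M (j + 1)) ih (hsucc j)
  have hfoe : foe P edb = Pstar P σ edb k := by
    unfold foe Pstar
    apply Set.Subset.antisymm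
    · rintro r ((((⟨a, ha, rfl⟩ | ⟨j, hj, ν, hc, rfl⟩) | ⟨j, hj, ν, hc, rfl⟩) |
          ⟨j, hj, ν, hc, rfl⟩) | ⟨j, hj, g, hg, ν, ν', h1, h2, rfl⟩)
      · exact Or.inl (Or.inl (Or.inl (Or.inl ⟨a, ha, rfl⟩)))
      · exact Or.inl (Or.inl (Or.inl (Or.inr
          ⟨j, ⟨j.isLt, hk _ (List.get_mem P j)⟩, ν, hc, rfl⟩)))
      · exact Or.inl (Or.inl (Or.inr
          ⟨j, ⟨j.isLt, hk _ (List.get_mem P j)⟩, ν, hc, rfl⟩))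
      · exact Or.inl (Or.inr
          ⟨j, ⟨j.isLt, hk _ (List.get_mem P j)⟩, ν, hc, rfl⟩)
      · exact Or.inr
          ⟨j, ⟨j.isLt, hk _ (List.get_mem P j)⟩, g, hg, ν, ν', h1, h2, rfl⟩
    · exact foeOn_mono_keep (Set.subset_univ _)
  rw [hfoe]
  exact hall k
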